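/- Let u ∼ N(0, D) on ℝᵖ and δ ∼ N(0, I_n) on ℝⁿ be independent, D symmetric positive definite, Φ an n×p real matrix, α ∈ ℝⁿ fixed. Define v = Φu + δ and θ = u + D Φᵀ (Φ D Φᵀ + I_n)⁻¹ (α − v). Then θ ∼ N(μ, Σ) with Σ = (ΦᵀΦ + D⁻¹)⁻¹ and μ = Σ Φᵀ α. -/

import Mathlib

open Matrix MeasureTheory ProbabilityTheory Real
open scoped NNReal ENNReal

lemma gaussianPDFReal_conv (m₁ m₂ : ℝ) {v₁ v₂ : ℝ≥0} (h₁ : v₁ ≠ 0) (h₂ : v₂ ≠ 0) (z : ℝ) :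
    ∫ x, gaussianPDFReal m₁ v₁ x * gaussianPDFReal m₂ v₂ (z - x)
      = gaussianPDFReal (m₁ + m₂) (v₁ + v₂) z := by
  have hv₁ : (0:ℝ) < v₁ := lt_of_le_of_ne v₁.coe_nonneg (by exact_mod_cast (Ne.symm h₁))
  have hv₂ : (0:ℝ) < v₂ := lt_of_le_of_ne v₂.coe_nonneg (by exact_mod_cast (Ne.symm h₂))
  have hv : (0:ℝ) < (v₁:ℝ) + v₂ := by linarith
  set A : ℝ := ((v₁:ℝ) + v₂) / (2 * v₁ * v₂) with hA
  have hApos : 0 < A := by positivity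
  set x₀ : ℝ := (m₁ * v₂ + (z - m₂) * v₁) / ((v₁:ℝ) + v₂) with hx₀
  have hpoint : ∀ x, gaussianPDFReal m₁ v₁ x * gaussianPDFReal m₂ v₂ (z - x)
      = (gaussianPDFReal (m₁ + m₂) (v₁ + v₂) z * (√(π / A))⁻¹) * rexp (-A * (x - x₀)^2) := by
    intro x
    unfold gaussianPDFReal
    have hcoef : (√(2 * π * v₁))⁻¹ * (√(2 * π * v₂))⁻¹
        = (√(2 * π * ((v₁:ℝ) + v₂)))⁻¹ * (√(π / A))⁻¹ := by
      rw [← mul_inv, ← mul_inv]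
      congr 1
      rw [← Real.sqrt_mul (by positivity), ← Real.sqrt_mul (by positivity)]
      congr 1
      rw [hA]
      field_simp
    have hexp : -(x - m₁)^2 / (2 * v₁) + -(z - x - m₂)^2 / (2 * v₂)
        = -(z - (m₁ + m₂))^2 / (2 * ((v₁:ℝ) + v₂)) + (-A * (x - x₀)^2) := by
      rw [hA, hx₀]
      field_simp
      ring
    push_cast
    calc (√(2 * π * v₁))⁻¹ * rexp (-(x - m₁)^2 / (2 * v₁))
        * ((√(2 * π * v₂))⁻¹ * rexp (-(z - x - m₂)^2 / (2 * v₂)))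
        = ((√(2 * π * v₁))⁻¹ * (√(2 * π * v₂))⁻¹)
          * rexp (-(x - m₁)^2 / (2 * v₁) + -(z - x - m₂)^2 / (2 * v₂)) := by
          rw [Real.exp_add]; ring
      _ = _ := by
          rw [hcoef, hexp, Real.exp_add]; ring
  simp_rw [hpoint]
  rw [MeasureTheory.integral_const_mul]
  have hshift : ∫ x, rexp (-A * (x - x₀)^2) = √(π / A) := by
    rw [integral_sub_right_eq_self (fun x => rexp (-A * x ^ 2)) x₀]
    exact integral_gaussian A
  rw [hshift, mul_assoc, inv_mul_cancel₀ (ne_of_gt (Real.sqrt_pos.2 (by positivity))), mul_one]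

lemma integrable_gaussianPDFReal_conv (m₁ m₂ : ℝ) (v₁ v₂ : ℝ≥0) (z : ℝ) :
    Integrable (fun x => gaussianPDFReal m₁ v₁ x * gaussianPDFReal m₂ v₂ (z - x)) := by
  have h : Integrable (fun x => gaussianPDFReal m₂ v₂ (z - x) * gaussianPDFReal m₁ v₁ x) := by
    refine Integrable.bdd_mul (c := (√(2 * π * v₂))⁻¹) (integrable_gaussianPDFReal m₁ v₁)
      ((measurable_gaussianPDFReal m₂ v₂).comp (measurable_const.sub measurable_id)).aestronglyMeasurable ?_
    refine ae_of_all _ fun x => ?_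
    rw [Real.norm_eq_abs, abs_of_nonneg (gaussianPDFReal_nonneg _ _ _)]
    unfold gaussianPDFReal
    have h1 : rexp (-(z - x - m₂) ^ 2 / (2 * v₂)) ≤ 1 := by
      rw [Real.exp_le_one_iff]
      apply div_nonpos_of_nonpos_of_nonneg (neg_nonpos_of_nonneg (sq_nonneg _)) (by positivity)
    calc (√(2 * π * v₂))⁻¹ * rexp (-(z - x - m₂) ^ 2 / (2 * v₂))
        ≤ (√(2 * π * v₂))⁻¹ * 1 := by
          apply mul_le_mul_of_nonneg_left h1 (by positivity)
      _ = _ := mul_one _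
  exact h.congr (Filter.EventuallyEq.of_eq (by funext x; ring))

lemma lintegral_gaussianPDF_conv (m₁ m₂ : ℝ) {v₁ v₂ : ℝ≥0} (h₁ : v₁ ≠ 0) (h₂ : v₂ ≠ 0) (z : ℝ) :
    ∫⁻ x, gaussianPDF m₁ v₁ x * gaussianPDF m₂ v₂ (z - x) = gaussianPDF (m₁ + m₂) (v₁ + v₂) z := by
  unfold gaussianPDF
  rw [← gaussianPDFReal_conv m₁ m₂ h₁ h₂ z,
    ofReal_integral_eq_lintegral_ofReal (integrable_gaussianPDFReal_conv m₁ m₂ v₁ v₂ z)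
      (ae_of_all _ fun x => mul_nonneg (gaussianPDFReal_nonneg _ _ _) (gaussianPDFReal_nonneg _ _ _))]
  congr 1 with x
  rw [ENNReal.ofReal_mul (gaussianPDFReal_nonneg _ _ _)]

lemma gaussianReal_conv (m₁ m₂ : ℝ) (v₁ v₂ : ℝ≥0) :
    Measure.map (fun q : ℝ × ℝ => q.1 + q.2) ((gaussianReal m₁ v₁).prod (gaussianReal m₂ v₂))
      = gaussianReal (m₁ + m₂) (v₁ + v₂) := by
  have hadd : Measurable (fun q : ℝ × ℝ => q.1 + q.2) := by fun_prop
  by_cases h₁ : v₁ = 0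
  · subst h₁
    rw [gaussianReal_zero_var, Measure.dirac_prod, Measure.map_map hadd measurable_prodMk_left]
    have : (fun q : ℝ × ℝ => q.1 + q.2) ∘ (Prod.mk m₁) = fun x => m₁ + x := rfl
    rw [this, gaussianReal_map_const_add, add_comm m₂ m₁, zero_add]
  by_cases h₂ : v₂ = 0
  · subst h₂
    rw [gaussianReal_zero_var, Measure.prod_dirac, Measure.map_map hadd measurable_prodMk_right]
    have : (fun q : ℝ × ℝ => q.1 + q.2) ∘ (fun x => (x, m₂)) = fun x => x + m₂ := rfl
    rw [this, gaussianReal_map_add_const, add_zero]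
  have h₁₂ : v₁ + v₂ ≠ 0 := by simp [h₁, h₂]
  have hf₁ := measurable_gaussianPDF m₁ v₁
  have hf₂ := measurable_gaussianPDF m₂ v₂
  ext s hs
  rw [Measure.map_apply hadd hs, Measure.prod_apply (hadd hs),
    gaussianReal_of_var_ne_zero m₁ h₁, gaussianReal_of_var_ne_zero m₂ h₂,
    gaussianReal_of_var_ne_zero _ h₁₂]
  have hinner : ∀ x : ℝ,
      (volume.withDensity (gaussianPDF m₂ v₂)) (Prod.mk x ⁻¹' ((fun q : ℝ × ℝ => q.1 + q.2) ⁻¹' s))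
        = ∫⁻ z, s.indicator (fun _ => (1 : ℝ≥0∞)) z * gaussianPDF m₂ v₂ (z - x) := by
    intro x
    have hAx : MeasurableSet (Prod.mk x ⁻¹' ((fun q : ℝ × ℝ => q.1 + q.2) ⁻¹' s)) :=
      measurable_prodMk_left (hadd hs)
    rw [withDensity_apply _ hAx, ← lintegral_indicator hAx,
      ← lintegral_add_right_eq_self (fun z => s.indicator (fun _ => (1 : ℝ≥0∞)) z * gaussianPDF m₂ v₂ (z - x)) x]
    congr 1 with y
    classical
    have hmem : (y ∈ Prod.mk x ⁻¹' ((fun q : ℝ × ℝ => q.1 + q.2) ⁻¹' s)) ↔ y + x ∈ s := by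
      simp [Set.mem_preimage, add_comm]
    simp only [Set.indicator, add_sub_cancel_right, ite_mul, one_mul, zero_mul]
    exact if_congr hmem rfl rfl
  rw [lintegral_withDensity_eq_lintegral_mul _ hf₁
    (measurable_measure_prodMk_left (hadd hs))]
  calc ∫⁻ x, (gaussianPDF m₁ v₁ * fun x =>
        (volume.withDensity (gaussianPDF m₂ v₂)) (Prod.mk x ⁻¹' ((fun q : ℝ × ℝ => q.1 + q.2) ⁻¹' s))) x
      = ∫⁻ x, ∫⁻ z, gaussianPDF m₁ v₁ x *
          (s.indicator (fun _ => (1 : ℝ≥0∞)) z * gaussianPDF m₂ v₂ (z - x)) := by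
        refine lintegral_congr fun x => ?_
        simp only [Pi.mul_apply]
        rw [hinner x, lintegral_const_mul _ (by
          exact ((measurable_indicator_const_iff 1).mpr hs).mul (hf₂.comp (measurable_id.sub measurable_const)))]
    _ = ∫⁻ z, ∫⁻ x, gaussianPDF m₁ v₁ x *
          (s.indicator (fun _ => (1 : ℝ≥0∞)) z * gaussianPDF m₂ v₂ (z - x)) := by
        apply lintegral_lintegral_swap
        apply Measurable.aemeasurable
        apply (hf₁.comp measurable_fst).mul
        exact (((measurable_indicator_const_iff 1).mpr hs).comp measurable_snd).mul
          (hf₂.comp (measurable_snd.sub measurable_fst))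
    _ = ∫⁻ z, s.indicator (fun _ => (1 : ℝ≥0∞)) z * ∫⁻ x, gaussianPDF m₁ v₁ x * gaussianPDF m₂ v₂ (z - x) := by
        refine lintegral_congr fun z => ?_
        rw [← lintegral_const_mul _ (show Measurable fun x => gaussianPDF m₁ v₁ x * gaussianPDF m₂ v₂ (z - x) by
          exact hf₁.mul (hf₂.comp (measurable_const.sub measurable_id)))]
        refine lintegral_congr fun x => ?_
        ring
    _ = ∫⁻ z, s.indicator (fun _ => (1 : ℝ≥0∞)) z * gaussianPDF (m₁ + m₂) (v₁ + v₂) z := by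
        refine lintegral_congr fun z => ?_
        rw [lintegral_gaussianPDF_conv m₁ m₂ h₁ h₂ z]
    _ = ∫⁻ z in s, gaussianPDF (m₁ + m₂) (v₁ + v₂) z := by
        rw [← lintegral_indicator hs]
        refine lintegral_congr fun z => ?_
        by_cases hz : z ∈ s <;> simp [Set.indicator, hz]
    _ = _ := (withDensity_apply _ hs).symm

lemma IndepFun.gaussian_add {Ω : Type*} [MeasurableSpace Ω] {Pm : Measure Ω}
    [IsProbabilityMeasure Pm] {X Y : Ω → ℝ} (hX : Measurable X) (hY : Measurable Y)
    (h : IndepFun X Y Pm) {m₁ m₂ : ℝ} {v₁ v₂ : ℝ≥0}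
    (hXg : Measure.map X Pm = gaussianReal m₁ v₁) (hYg : Measure.map Y Pm = gaussianReal m₂ v₂) :
    Measure.map (fun ω => X ω + Y ω) Pm = gaussianReal (m₁ + m₂) (v₁ + v₂) := by
  have hmap : Measure.map (fun ω => (X ω, Y ω)) Pm
      = (gaussianReal m₁ v₁).prod (gaussianReal m₂ v₂) := by
    rw [← hXg, ← hYg]
    exact (indepFun_iff_map_prod_eq_prod_map_map hX.aemeasurable hY.aemeasurable).mp h
  calc Measure.map (fun ω => X ω + Y ω) Pm
      = Measure.map ((fun q : ℝ × ℝ => q.1 + q.2) ∘ fun ω => (X ω, Y ω)) Pm := rfl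
    _ = Measure.map (fun q : ℝ × ℝ => q.1 + q.2) (Measure.map (fun ω => (X ω, Y ω)) Pm) :=
        (Measure.map_map (by fun_prop) (hX.prodMk hY)).symm
    _ = _ := by rw [hmap, gaussianReal_conv]

lemma measurable_dotProduct {Ω : Type*} [MeasurableSpace Ω] {ι : Type*} [Fintype ι]
    (a : ι → ℝ) {f : Ω → ι → ℝ} (hf : Measurable f) :
    Measurable fun ω => a ⬝ᵥ f ω := by
  unfold dotProduct
  exact Finset.measurable_sum _ fun i _ => ((measurable_pi_apply i).comp hf).const_mul _

/-- A random vector `x` is Gaussian with mean `m` and covariance `C` if every linear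
functional of it is a real Gaussian with the corresponding mean and variance. -/
def IsGaussianVec {Ω : Type*} [MeasurableSpace Ω] (Pm : Measure Ω)
    {ι : Type*} [Fintype ι] (x : Ω → ι → ℝ) (m : ι → ℝ) (C : Matrix ι ι ℝ) : Prop :=
  ∀ t : ι → ℝ, Measure.map (fun ω => t ⬝ᵥ x ω) Pm =
    gaussianReal (t ⬝ᵥ m) (t ⬝ᵥ (C *ᵥ t)).toNNReal

theorem algorithm_correctness {Ω : Type*} [MeasurableSpace Ω] (Pm : Measure Ω)
    [IsProbabilityMeasure Pm] {n p : ℕ} (Φ : Matrix (Fin n) (Fin p) ℝ)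
    (D : Matrix (Fin p) (Fin p) ℝ) (hD : D.PosDef) (α : Fin n → ℝ)
    (u : Ω → Fin p → ℝ) (δ : Ω → Fin n → ℝ)
    (hu : IsGaussianVec Pm u 0 D) (hδ : IsGaussianVec Pm δ 0 1)
    (hu_meas : Measurable u) (hδ_meas : Measurable δ)
    (hindep : IndepFun u δ Pm) :
    let v : Ω → Fin n → ℝ := fun ω => Φ *ᵥ u ω + δ ω
    let θ : Ω → Fin p → ℝ :=
      fun ω => u ω + (D * Φᵀ * (Φ * D * Φᵀ + 1)⁻¹) *ᵥ (α - v ω)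
    let Sig := (Φᵀ * Φ + D⁻¹)⁻¹
    IsGaussianVec Pm θ ((Sig * Φᵀ) *ᵥ α) Sig := by
  intro v θ Sig t
  have hθ : ∀ ω, θ ω = u ω + (D * Φᵀ * (Φ * D * Φᵀ + 1)⁻¹) *ᵥ (α - (Φ *ᵥ u ω + δ ω)) :=
    fun ω => rfl
  have hSig : Sig = (Φᵀ * Φ + D⁻¹)⁻¹ := rfl
  set M : Matrix (Fin p) (Fin n) ℝ := D * Φᵀ * (Φ * D * Φᵀ + 1)⁻¹ with hMdef
  -- basic facts
  have hDT : Dᵀ = D := by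
    rw [← Matrix.conjTranspose_eq_transpose_of_trivial]; exact hD.1
  have hE : (Φ * D * Φᵀ + 1).PosDef := by
    rw [add_comm]
    refine Matrix.PosDef.add_posSemidef Matrix.PosDef.one ?_
    have h := hD.posSemidef.mul_mul_conjTranspose_same Φ
    rwa [Matrix.conjTranspose_eq_transpose_of_trivial] at h
  have hS : (Φᵀ * Φ + D⁻¹).PosDef := by
    rw [add_comm]
    refine Matrix.PosDef.add_posSemidef hD.inv ?_
    have h := Matrix.posSemidef_conjTranspose_mul_self Φ
    rwa [Matrix.conjTranspose_eq_transpose_of_trivial] at h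
  have hDdet : IsUnit D.det := (Matrix.isUnit_iff_isUnit_det D).mp hD.isUnit
  have hEdet : IsUnit (Φ * D * Φᵀ + 1).det := (Matrix.isUnit_iff_isUnit_det _).mp hE.isUnit
  have hSdet : IsUnit (Φᵀ * Φ + D⁻¹).det := (Matrix.isUnit_iff_isUnit_det _).mp hS.isUnit
  have hSigT : Sigᵀ = Sig := by
    rw [hSig, Matrix.transpose_nonsing_inv, Matrix.transpose_add, Matrix.transpose_mul,
      Matrix.transpose_transpose, Matrix.transpose_nonsing_inv, hDT]
  -- key matrix identities
  have key1 : (Φᵀ * Φ + D⁻¹) * (D * Φᵀ) = Φᵀ * (Φ * D * Φᵀ + 1) := by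
    have h1 : D⁻¹ * (D * Φᵀ) = Φᵀ := by
      rw [← Matrix.mul_assoc, Matrix.nonsing_inv_mul D hDdet, Matrix.one_mul]
    rw [Matrix.add_mul, h1, Matrix.mul_add, Matrix.mul_one]
    congr 1
    simp [Matrix.mul_assoc]
  have hSS : Sig * (Φᵀ * Φ + D⁻¹) = 1 := by rw [hSig]; exact Matrix.nonsing_inv_mul _ hSdet
  have hSS' : (Φᵀ * Φ + D⁻¹) * Sig = 1 := by rw [hSig]; exact Matrix.mul_nonsing_inv _ hSdet
  have hEE : (Φ * D * Φᵀ + 1) * (Φ * D * Φᵀ + 1)⁻¹ = 1 := Matrix.mul_nonsing_inv _ hEdet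
  have hM : M = Sig * Φᵀ := by
    calc M = (1 : Matrix (Fin p) (Fin p) ℝ) * (D * Φᵀ * (Φ * D * Φᵀ + 1)⁻¹) := by rw [Matrix.one_mul]
      _ = Sig * ((Φᵀ * Φ + D⁻¹) * (D * Φᵀ) * (Φ * D * Φᵀ + 1)⁻¹) := by
          rw [← hSS]; simp only [Matrix.mul_assoc]
      _ = Sig * (Φᵀ * ((Φ * D * Φᵀ + 1) * (Φ * D * Φᵀ + 1)⁻¹)) := by
          rw [key1]; simp only [Matrix.mul_assoc]
      _ = Sig * Φᵀ := by rw [hEE, Matrix.mul_one]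
  have hGD : 1 - M * Φ = Sig * D⁻¹ := by
    rw [hM]
    calc 1 - Sig * Φᵀ * Φ = Sig * (Φᵀ * Φ + D⁻¹) - Sig * (Φᵀ * Φ) := by
          rw [hSS, Matrix.mul_assoc]
      _ = Sig * (Φᵀ * Φ + D⁻¹ - Φᵀ * Φ) := by rw [Matrix.mul_sub]
      _ = Sig * D⁻¹ := by rw [add_sub_cancel_left]
  have hkey : (1 - M * Φ) * D * (1 - M * Φ)ᵀ + M * Mᵀ = Sig := by
    rw [hGD, hM, Matrix.transpose_mul, Matrix.transpose_mul, Matrix.transpose_nonsing_inv,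
      Matrix.transpose_transpose, hDT, hSigT]
    have e1 : Sig * D⁻¹ * D = Sig := by
      rw [Matrix.mul_assoc, Matrix.nonsing_inv_mul D hDdet, Matrix.mul_one]
    rw [e1]
    calc Sig * (D⁻¹ * Sig) + Sig * Φᵀ * (Φ * Sig)
        = Sig * (D⁻¹ * Sig) + Sig * (Φᵀ * Φ * Sig) := by simp only [Matrix.mul_assoc]
      _ = Sig * (D⁻¹ * Sig + Φᵀ * Φ * Sig) := by rw [Matrix.mul_add]
      _ = Sig * ((Φᵀ * Φ + D⁻¹) * Sig) := by rw [Matrix.add_mul, add_comm]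
      _ = Sig := by rw [hSS', Matrix.mul_one]
  -- probabilistic part
  set a : Fin p → ℝ := t ᵥ* (1 - M * Φ) with ha
  set b : Fin n → ℝ := -(t ᵥ* M) with hb
  set c : ℝ := (t ᵥ* M) ⬝ᵥ α with hc
  have hfun : (fun ω => t ⬝ᵥ θ ω) = fun ω => (a ⬝ᵥ u ω + b ⬝ᵥ δ ω) + c := by
    funext ω
    rw [hθ ω, ha, hb, hc]
    simp only [dotProduct_add, dotProduct_sub, Matrix.dotProduct_mulVec,
      Matrix.vecMul_sub, Matrix.vecMul_one, sub_dotProduct, neg_dotProduct,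
      ← Matrix.vecMul_vecMul]
    ring
  have hXm : Measurable fun ω => a ⬝ᵥ u ω := measurable_dotProduct a hu_meas
  have hYm : Measurable fun ω => b ⬝ᵥ δ ω := measurable_dotProduct b hδ_meas
  have hXg := hu a
  rw [dotProduct_zero] at hXg
  have hYg := hδ b
  rw [dotProduct_zero, Matrix.one_mulVec] at hYg
  have hind : IndepFun (fun ω => a ⬝ᵥ u ω) (fun ω => b ⬝ᵥ δ ω) Pm :=
    hindep.comp (measurable_dotProduct a measurable_id) (measurable_dotProduct b measurable_id)
  have hsum := IndepFun.gaussian_add hXm hYm hind hXg hYg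
  rw [hfun]
  have hcomp : (fun ω => (a ⬝ᵥ u ω + b ⬝ᵥ δ ω) + c)
      = (fun x => x + c) ∘ (fun ω => a ⬝ᵥ u ω + b ⬝ᵥ δ ω) := rfl
  rw [hcomp, ← Measure.map_map (measurable_add_const c)
    (show Measurable fun ω => a ⬝ᵥ u ω + b ⬝ᵥ δ ω from hXm.add hYm), hsum,
    gaussianReal_map_add_const, zero_add, zero_add]
  have hva : a ⬝ᵥ (D *ᵥ a) = t ⬝ᵥ (((1 - M * Φ) * D * (1 - M * Φ)ᵀ) *ᵥ t) := by
    rw [ha]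
    calc (t ᵥ* (1 - M * Φ)) ⬝ᵥ (D *ᵥ (t ᵥ* (1 - M * Φ)))
        = (t ᵥ* (1 - M * Φ)) ⬝ᵥ (D *ᵥ ((1 - M * Φ)ᵀ *ᵥ t)) := by rw [Matrix.mulVec_transpose]
      _ = (t ᵥ* (1 - M * Φ)) ⬝ᵥ ((D * (1 - M * Φ)ᵀ) *ᵥ t) := by rw [Matrix.mulVec_mulVec]
      _ = t ⬝ᵥ ((1 - M * Φ) *ᵥ ((D * (1 - M * Φ)ᵀ) *ᵥ t)) := (Matrix.dotProduct_mulVec _ _ _).symm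
      _ = t ⬝ᵥ (((1 - M * Φ) * (D * (1 - M * Φ)ᵀ)) *ᵥ t) := by rw [Matrix.mulVec_mulVec]
      _ = _ := by rw [← Matrix.mul_assoc]
  have hvb : b ⬝ᵥ b = t ⬝ᵥ ((M * Mᵀ) *ᵥ t) := by
    rw [hb, neg_dotProduct, dotProduct_neg, neg_neg]
    calc (t ᵥ* M) ⬝ᵥ (t ᵥ* M)
        = (t ᵥ* M) ⬝ᵥ (Mᵀ *ᵥ t) := by rw [Matrix.mulVec_transpose]
      _ = t ⬝ᵥ (M *ᵥ (Mᵀ *ᵥ t)) := (Matrix.dotProduct_mulVec _ _ _).symm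
      _ = _ := by rw [Matrix.mulVec_mulVec]
  have hnn1 : 0 ≤ a ⬝ᵥ (D *ᵥ a) := by
    have h := hD.posSemidef.dotProduct_mulVec_nonneg a
    rwa [star_trivial] at h
  have hnn2 : 0 ≤ b ⬝ᵥ b := by
    have h := (Matrix.PosDef.one (n := Fin n) (R := ℝ)).posSemidef.dotProduct_mulVec_nonneg b
    rwa [star_trivial, Matrix.one_mulVec] at h
  congr 1
  · rw [hc, ← Matrix.dotProduct_mulVec, hM]
  · rw [← Real.toNNReal_add hnn1 hnn2, hva, hvb, ← dotProduct_add, ← Matrix.add_mulVec,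
      hkey]
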